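/- Let {F_i}_{i∈Z^d} be a commuting filtration on a probability space (Ω,F,P). Then the one-coordinate projection operators commute: for all ℓ₁,ℓ₂ ∈ Z and q₁,q₂ ∈ {1,…,d} with q₁ ≠ q₂, and every f ∈ L²(F), one has P^(q₁)_{ℓ₁}(P^(q₂)_{ℓ₂} f) = P^(q₂)_{ℓ₂}(P^(q₁)_{ℓ₁} f) almost surely; consequently the operators {P_j}_{j∈Z^d} also pairwise commute. -/

import Mathlib

open MeasureTheory ProbabilityTheory Filter
open scoped ENNReal NNReal

noncomputable section

/-- The σ-algebra `F^(q)_ℓ` generated by all `F i` with `i q ≤ ℓ`. -/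
def sigmaQ {Ω : Type} {d : ℕ} (F : (Fin d → ℤ) → MeasurableSpace Ω)
    (q : Fin d) (l : ℤ) : MeasurableSpace Ω :=
  ⨆ i : Fin d → ℤ, ⨆ _ : i q ≤ l, F i

/-- The one-coordinate projection operator `P^(q)_ℓ f = E(f | F^(q)_ℓ) − E(f | F^(q)_{ℓ−1})`. -/
def projQ {Ω : Type} [MeasurableSpace Ω] {d : ℕ} (P : Measure Ω)
    (F : (Fin d → ℤ) → MeasurableSpace Ω) (q : Fin d) (l : ℤ) (f : Ω → ℝ) : Ω → ℝ :=
  P[f | sigmaQ F q l] - P[f | sigmaQ F q (l - 1)]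

/-- The projection operator `P_j = P^(1)_{j 1} ∘ ⋯ ∘ P^(d)_{j d}`. -/
def projP {Ω : Type} [MeasurableSpace Ω] {d : ℕ} (P : Measure Ω)
    (F : (Fin d → ℤ) → MeasurableSpace Ω) (j : Fin d → ℤ) (f : Ω → ℝ) : Ω → ℝ :=
  (List.finRange d).foldr (fun q g => projQ P F q (j q) g) f

/-- `F` is a commuting filtration of sub-σ-algebras of the ambient σ-algebra:
it is monotone and conditional expectations of bounded `F ℓ`-measurable random variables
satisfy `E(Y | F k) = E(Y | F (k ⊓ ℓ))` a.s. -/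
def IsCommutingFiltration {Ω : Type} [m0 : MeasurableSpace Ω] (P : Measure Ω) {d : ℕ}
    (F : (Fin d → ℤ) → MeasurableSpace Ω) : Prop :=
  (∀ i, F i ≤ m0) ∧ (∀ i j : Fin d → ℤ, i ≤ j → F i ≤ F j) ∧
    ∀ (k l : Fin d → ℤ) (Y : Ω → ℝ), (∃ C, ∀ ω, |Y ω| ≤ C) → Measurable[F l] Y →
      P[Y | F k] =ᵐ[P] P[Y | F (k ⊓ l)]

end

open scoped Topology

noncomputable section Aux2
section Aux
variable {Ω : Type} [m0 : MeasurableSpace Ω] {P : Measure Ω} [IsProbabilityMeasure P]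
  {d : ℕ} {F : (Fin d → ℤ) → MeasurableSpace Ω}

lemma sigmaQ_le' (hF : IsCommutingFiltration P F) (q : Fin d) (l : ℤ) : sigmaQ F q l ≤ m0 :=
  iSup_le fun i => iSup_le fun _ => hF.1 i

lemma F_le_sigmaQ {q : Fin d} {l : ℤ} {i : Fin d → ℤ} (h : i q ≤ l) : F i ≤ sigmaQ F q l :=
  le_iSup_of_le i (le_iSup_of_le h le_rfl)

lemma sigmaQ_mono' (hF : IsCommutingFiltration P F) (q : Fin d) {l l' : ℤ} (h : l ≤ l') :
    sigmaQ F q l ≤ sigmaQ F q l' :=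
  iSup₂_le fun _ hi => F_le_sigmaQ (hi.trans h)

/-- commuting property for integrable (not nec. bounded) Y -/
lemma condexp_F_inf (hF : IsCommutingFiltration P F) (k l : Fin d → ℤ) {Y : Ω → ℝ}
    (hYi : Integrable Y P) (hYm : StronglyMeasurable[F l] Y) :
    P[Y | F k] =ᵐ[P] P[Y | F (k ⊓ l)] := by
  set YN : ℕ → Ω → ℝ := fun N ω => max (-(N : ℝ)) (min (N : ℝ) (Y ω)) with hYNdef
  have hYmm : Measurable[F l] Y := hYm.measurable
  have hYNm : ∀ N, Measurable[F l] (YN N) := fun N =>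
    measurable_const.max (measurable_const.min hYmm)
  have hYNb : ∀ N ω, |YN N ω| ≤ (N : ℝ) :=
    fun N ω => abs_le.2 ⟨le_max_left _ _,
      max_le (neg_le_self (Nat.cast_nonneg N)) (min_le_left _ _)⟩
  have hYNabs : ∀ N ω, |YN N ω| ≤ |Y ω| := by
    intro N ω
    rcases le_total (Y ω) 0 with h | h
    · simp only [YN]
      rw [min_eq_right (h.trans (Nat.cast_nonneg N))]
      rcases le_total (-(N:ℝ)) (Y ω) with h2 | h2
      · rw [max_eq_right h2]
      · rw [max_eq_left h2, abs_of_nonpos (neg_nonpos.2 (Nat.cast_nonneg N)),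
          abs_of_nonpos h]; linarith
    · simp only [YN]
      rw [max_eq_right ((neg_nonpos.2 (Nat.cast_nonneg N)).trans
        (le_min (Nat.cast_nonneg N) h)), abs_of_nonneg (le_min (Nat.cast_nonneg N) h),
        abs_of_nonneg h]
      exact min_le_right _ _
  have hYNi : ∀ N, Integrable (YN N) P := by
    intro N
    refine hYi.abs.mono' (((hYNm N).mono (hF.1 l) le_rfl).aestronglyMeasurable) ?_
    exact Filter.Eventually.of_forall fun ω => by
      simpa [Real.norm_eq_abs, abs_abs] using (hYNabs N ω)
  have h_eq : ∀ N, P[YN N | F k] =ᵐ[P] P[YN N | F (k ⊓ l)] := fun N =>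
    hF.2.2 k l (YN N) ⟨N, hYNb N⟩ (hYNm N)
  have hL1 : Tendsto (fun N => eLpNorm (Y - YN N) 1 P) atTop (𝓝 0) := by
    have hYme : Measurable Y := hYmm.mono (hF.1 l) le_rfl
    have hmeas : ∀ N : ℕ, Measurable (fun ω => (‖Y ω - YN N ω‖₊ : ℝ≥0∞)) := fun N =>
      (hYme.sub ((hYNm N).mono (hF.1 l) le_rfl)).nnnorm.coe_nnreal_ennreal
    have hbound : ∀ N : ℕ, (fun ω => (‖Y ω - YN N ω‖₊ : ℝ≥0∞)) ≤ᵐ[P]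
        fun ω => 2 * (‖Y ω‖₊ : ℝ≥0∞) := by
      intro N
      refine Filter.Eventually.of_forall fun ω => ?_
      have h1 : ‖YN N ω‖₊ ≤ ‖Y ω‖₊ := by
        rw [← NNReal.coe_le_coe]
        simpa [Real.norm_eq_abs] using hYNabs N ω
      calc (‖Y ω - YN N ω‖₊ : ℝ≥0∞) ≤ (‖Y ω‖₊ : ℝ≥0∞) + (‖YN N ω‖₊ : ℝ≥0∞) := by
            exact_mod_cast nnnorm_sub_le _ _
        _ ≤ (‖Y ω‖₊ : ℝ≥0∞) + (‖Y ω‖₊ : ℝ≥0∞) := add_le_add_right (by exact_mod_cast h1) _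
        _ = 2 * ‖Y ω‖₊ := (two_mul _).symm
    have h_fin : ∫⁻ ω, 2 * (‖Y ω‖₊ : ℝ≥0∞) ∂P ≠ ∞ := by
      rw [lintegral_const_mul _ hYme.nnnorm.coe_nnreal_ennreal]
      exact ENNReal.mul_ne_top (by norm_num) hYi.2.ne
    have h_lim : ∀ᵐ ω ∂P, Tendsto (fun N => (‖Y ω - YN N ω‖₊ : ℝ≥0∞)) atTop (𝓝 0) := by
      refine Filter.Eventually.of_forall fun ω => ?_
      have hev : ∀ᶠ N : ℕ in atTop, (‖Y ω - YN N ω‖₊ : ℝ≥0∞) = 0 := by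
        filter_upwards [eventually_ge_atTop ⌈|Y ω|⌉₊] with N hN
        have h1 : |Y ω| ≤ (N : ℝ) := (Nat.le_ceil _).trans (by exact_mod_cast hN)
        have h2 : YN N ω = Y ω := by
          simp only [YN]
          rw [min_eq_right ((le_abs_self _).trans h1),
            max_eq_right (by nlinarith [neg_abs_le (Y ω)])]
        simp [h2]
      exact tendsto_const_nhds.congr' (hev.mono fun N h => h.symm)
    have := tendsto_lintegral_of_dominated_convergence _ hmeas hbound h_fin h_lim
    simp only [lintegral_zero] at this
    refine Tendsto.congr (fun N => ?_) this
    rw [eLpNorm_one_eq_lintegral_enorm]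
    rfl
  have key : ∀ N, eLpNorm (P[Y|F k] - P[Y|F (k ⊓ l)]) 1 P ≤ 2 * eLpNorm (Y - YN N) 1 P := by
    intro N
    have c1 : P[Y - YN N | F k] =ᵐ[P] P[Y|F k] - P[YN N|F k] := condExp_sub hYi (hYNi N) _
    have c2 : P[Y - YN N | F (k ⊓ l)] =ᵐ[P] P[Y|F (k ⊓ l)] - P[YN N|F (k ⊓ l)] :=
      condExp_sub hYi (hYNi N) _
    have e1 : P[Y|F k] - P[Y|F (k ⊓ l)] =ᵐ[P] P[Y - YN N|F k] - P[Y - YN N|F (k ⊓ l)] := by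
      filter_upwards [c1, c2, h_eq N] with ω h1 h2 h3
      simp only [Pi.sub_apply] at *
      linarith
    calc eLpNorm (P[Y|F k] - P[Y|F (k ⊓ l)]) 1 P
        = eLpNorm (P[Y - YN N|F k] - P[Y - YN N|F (k ⊓ l)]) 1 P := eLpNorm_congr_ae e1
      _ ≤ eLpNorm (P[Y - YN N|F k]) 1 P + eLpNorm (P[Y - YN N|F (k ⊓ l)]) 1 P :=
          eLpNorm_sub_le (stronglyMeasurable_condExp.mono (hF.1 k)).aestronglyMeasurable
            (stronglyMeasurable_condExp.mono (hF.1 _)).aestronglyMeasurable le_rfl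
      _ ≤ eLpNorm (Y - YN N) 1 P + eLpNorm (Y - YN N) 1 P := by
          gcongr <;> exact eLpNorm_one_condExp_le_eLpNorm _
      _ = 2 * eLpNorm (Y - YN N) 1 P := (two_mul _).symm
  have hz : eLpNorm (P[Y|F k] - P[Y|F (k ⊓ l)]) 1 P = 0 := by
    refine le_antisymm ?_ zero_le
    have h2 : Tendsto (fun N => 2 * eLpNorm (Y - YN N) 1 P) atTop (𝓝 0) := by
      simpa using ENNReal.Tendsto.const_mul hL1 (Or.inr (by norm_num))
    exact ge_of_tendsto' h2 key
  have hae := (eLpNorm_eq_zero_iff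
    (((stronglyMeasurable_condExp.mono (hF.1 k)).sub
      (stronglyMeasurable_condExp.mono (hF.1 _))).aestronglyMeasurable) one_ne_zero).1 hz
  filter_upwards [hae] with ω h
  simpa [Pi.sub_apply, sub_eq_zero] using h

lemma condexp_condexp_F (hF : IsCommutingFiltration P F) (j k : Fin d → ℤ) {f : Ω → ℝ} :
    P[P[f | F j] | F k] =ᵐ[P] P[f | F (k ⊓ j)] :=
  (condexp_F_inf hF k j integrable_condExp stronglyMeasurable_condExp).trans
    (condExp_condExp_of_le (hF.2.1 _ _ inf_le_right) (hF.1 j))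




/-- the cofinal sequence for `sigmaQ q l` -/
def qseq {d : ℕ} (q : Fin d) (l : ℤ) (n : ℕ) : Fin d → ℤ := Function.update (fun _ => (n:ℤ)) q l

lemma qseq_mono {d : ℕ} (q : Fin d) (l : ℤ) : Monotone (qseq q l) := by
  intro n m h p
  simp only [qseq, Function.update_apply]
  split_ifs
  · exact le_rfl
  · exact_mod_cast h

lemma qseq2_mono {d : ℕ} (q1 : Fin d) (l1 : ℤ) (q2 : Fin d) (l2 : ℤ) :
    Monotone (fun n => Function.update (qseq q1 l1 n) q2 l2) := by
  intro n m h p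
  simp only [qseq, Function.update_apply]
  split_ifs
  · exact le_rfl
  · exact le_rfl
  · exact_mod_cast h

def qfil (hF : IsCommutingFiltration P F) (q : Fin d) (l : ℤ) : Filtration ℕ m0 :=
  ⟨fun n => F (qseq q l n), fun _ _ h => hF.2.1 _ _ (qseq_mono q l h), fun _ => hF.1 _⟩

@[simp] lemma qfil_apply (hF : IsCommutingFiltration P F) (q : Fin d) (l : ℤ) (n : ℕ) :
    qfil hF q l n = F (qseq q l n) := rfl

def qfil2 (hF : IsCommutingFiltration P F) (q1 : Fin d) (l1 : ℤ) (q2 : Fin d) (l2 : ℤ) :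
    Filtration ℕ m0 :=
  ⟨fun n => F (Function.update (qseq q1 l1 n) q2 l2),
    fun _ _ h => hF.2.1 _ _ (qseq2_mono q1 l1 q2 l2 h), fun _ => hF.1 _⟩

@[simp] lemma qfil2_apply (hF : IsCommutingFiltration P F) (q1 : Fin d) (l1 : ℤ)
    (q2 : Fin d) (l2 : ℤ) (n : ℕ) :
    qfil2 hF q1 l1 q2 l2 n = F (Function.update (qseq q1 l1 n) q2 l2) := rfl

lemma iSup_qseq (hF : IsCommutingFiltration P F) (q : Fin d) (l : ℤ) :
    (⨆ n : ℕ, F (qseq q l n)) = sigmaQ F q l := by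
  apply le_antisymm
  · refine iSup_le fun n => F_le_sigmaQ ?_
    simp [qseq]
  · refine iSup₂_le fun i hi => ?_
    set n := Finset.univ.sup fun p => (i p).toNat with hn
    refine le_iSup_of_le n (hF.2.1 _ _ fun p => ?_)
    simp only [qseq, Function.update_apply]
    split_ifs with hp
    · exact hp ▸ hi
    · calc i p ≤ ((i p).toNat : ℤ) := Int.self_le_toNat _
        _ ≤ (n : ℤ) := by exact_mod_cast Finset.le_sup (f := fun p => (i p).toNat) (Finset.mem_univ p)

lemma condexp_comm (hF : IsCommutingFiltration P F) {q1 q2 : Fin d} (hq : q1 ≠ q2)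
    (l1 l2 : ℤ) (f : Ω → ℝ) (hf : Integrable f P) :
    P[P[f | sigmaQ F q1 l1] | sigmaQ F q2 l2]
      =ᵐ[P] P[f | ⨆ n : ℕ, F (Function.update (qseq q1 l1 n) q2 l2)] := by
  set g := P[f | sigmaQ F q1 l1] with hg
  set ms : ℕ → Fin d → ℤ := fun n => Function.update (qseq q1 l1 n) q2 l2 with hms
  have hB : (⨆ n : ℕ, F (qseq q2 l2 n)) = sigmaQ F q2 l2 := iSup_qseq hF q2 l2
  have hA : (⨆ n : ℕ, F (qseq q1 l1 n)) = sigmaQ F q1 l1 := iSup_qseq hF q1 l1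
  -- Step 2 : for n ≥ l1, P[g | F (kseq n)] = P[f | F (ms n)]
  have step2 : ∀ n : ℕ, l1 ≤ (n : ℤ) → P[g | F (qseq q2 l2 n)] =ᵐ[P] P[f | F (ms n)] := by
    intro n hn
    have t1 : Tendsto (fun m => eLpNorm (P[f | F (qseq q1 l1 m)] - g) 1 P) atTop (𝓝 0) := by
      have h := MeasureTheory.tendsto_eLpNorm_condExp (μ := P) (ℱ := qfil hF q1 l1) f
      simp only [qfil_apply] at h
      rwa [hA] at h
    have t2 : Tendsto (fun m => eLpNorm
        (P[P[f | F (qseq q1 l1 m)] | F (qseq q2 l2 n)] - P[g | F (qseq q2 l2 n)]) 1 P)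
        atTop (𝓝 0) := by
      refine tendsto_of_tendsto_of_tendsto_of_le_of_le tendsto_const_nhds t1
        (fun m => zero_le) (fun m => ?_)
      calc eLpNorm (P[P[f | F (qseq q1 l1 m)] | F (qseq q2 l2 n)]
              - P[g | F (qseq q2 l2 n)]) 1 P
          = eLpNorm (P[P[f | F (qseq q1 l1 m)] - g | F (qseq q2 l2 n)]) 1 P :=
            (eLpNorm_congr_ae (condExp_sub integrable_condExp integrable_condExp _)).symm
        _ ≤ eLpNorm (P[f | F (qseq q1 l1 m)] - g) 1 P := eLpNorm_one_condExp_le_eLpNorm _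
    have heqm : ∀ᶠ m : ℕ in atTop,
        P[P[f | F (qseq q1 l1 m)] | F (qseq q2 l2 n)] =ᵐ[P] P[f | F (ms n)] := by
      filter_upwards [eventually_ge_atTop n, eventually_ge_atTop l2.toNat] with m hm1 hm2
      have hm1' : (n : ℤ) ≤ (m : ℤ) := by exact_mod_cast hm1
      have hm2' : l2 ≤ (m : ℤ) := (Int.self_le_toNat l2).trans (by exact_mod_cast hm2)
      have hinf : qseq q2 l2 n ⊓ qseq q1 l1 m = ms n := by
        funext p
        simp only [ms, qseq, Pi.inf_apply, Function.update_apply]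
        split_ifs with h1 h2
        · exfalso; exact hq (by rw [← h2, h1])
        · omega
        · omega
        · omega
      refine (condexp_condexp_F hF _ _).trans ?_
      rw [hinf]
    have hz : eLpNorm (P[g | F (qseq q2 l2 n)] - P[f | F (ms n)]) 1 P = 0 := by
      have hc : ∀ᶠ m : ℕ in atTop,
          eLpNorm (P[g | F (qseq q2 l2 n)] - P[f | F (ms n)]) 1 P
            = eLpNorm (P[P[f | F (qseq q1 l1 m)] | F (qseq q2 l2 n)]
                - P[g | F (qseq q2 l2 n)]) 1 P := by
        filter_upwards [heqm] with m hm
        calc eLpNorm (P[g | F (qseq q2 l2 n)] - P[f | F (ms n)]) 1 P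
            = eLpNorm (P[g | F (qseq q2 l2 n)]
                - P[P[f | F (qseq q1 l1 m)] | F (qseq q2 l2 n)]) 1 P :=
              eLpNorm_congr_ae (EventuallyEq.sub EventuallyEq.rfl hm.symm)
          _ = eLpNorm (P[P[f | F (qseq q1 l1 m)] | F (qseq q2 l2 n)]
                - P[g | F (qseq q2 l2 n)]) 1 P := eLpNorm_sub_comm _ _ _ _
      exact tendsto_nhds_unique tendsto_const_nhds (t2.congr' (hc.mono fun m h => h.symm))
    have hae := (eLpNorm_eq_zero_iff
      (((stronglyMeasurable_condExp.mono (hF.1 _)).sub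
        (stronglyMeasurable_condExp.mono (hF.1 _))).aestronglyMeasurable) one_ne_zero).1 hz
    filter_upwards [hae] with ω h
    simpa [Pi.sub_apply, sub_eq_zero] using h
  -- Lévy upward on both sides
  have hlev1 : ∀ᵐ ω ∂P, Tendsto (fun n => (P[g | F (qseq q2 l2 n)]) ω) atTop
      (𝓝 ((P[g | sigmaQ F q2 l2]) ω)) := by
    have h := MeasureTheory.tendsto_ae_condExp (μ := P) (ℱ := qfil hF q2 l2) g
    simp only [qfil_apply] at h
    rwa [hB] at h
  have hlev2 : ∀ᵐ ω ∂P, Tendsto (fun n => (P[f | F (ms n)]) ω) atTop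
      (𝓝 ((P[f | ⨆ n : ℕ, F (ms n)]) ω)) := by
    have h := MeasureTheory.tendsto_ae_condExp (μ := P) (ℱ := qfil2 hF q1 l1 q2 l2) f
    simpa only [qfil2_apply] using h
  have hall : ∀ᵐ ω ∂P, ∀ n : ℕ, l1.toNat ≤ n →
      (P[g | F (qseq q2 l2 n)]) ω = (P[f | F (ms n)]) ω := by
    rw [ae_all_iff]
    intro n
    by_cases h : l1.toNat ≤ n
    · filter_upwards [step2 n ((Int.self_le_toNat l1).trans (by exact_mod_cast h))] with ω hω _
      exact hω
    · exact Filter.Eventually.of_forall fun ω h' => absurd h' h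
  filter_upwards [hlev1, hlev2, hall] with ω h1 h2 h3
  exact tendsto_nhds_unique
    (h1.congr' (eventually_atTop.2 ⟨l1.toNat, h3⟩)) h2



lemma condexp_comm_symm (hF : IsCommutingFiltration P F) {q1 q2 : Fin d} (hq : q1 ≠ q2)
    (l1 l2 : ℤ) (f : Ω → ℝ) (hf : Integrable f P) :
    P[P[f | sigmaQ F q1 l1] | sigmaQ F q2 l2]
      =ᵐ[P] P[P[f | sigmaQ F q2 l2] | sigmaQ F q1 l1] := by
  refine (condexp_comm hF hq l1 l2 f hf).trans ?_
  have h2 := condexp_comm hF hq.symm l2 l1 f hf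
  have he : (⨆ n : ℕ, F (Function.update (qseq q2 l2 n) q1 l1))
      = ⨆ n : ℕ, F (Function.update (qseq q1 l1 n) q2 l2) := by
    refine iSup_congr fun n => ?_
    congr 1
    simp only [qseq]
    exact Function.update_comm hq.symm _ _ _
  rw [he] at h2
  exact h2.symm

lemma condexp_sigmaQ_symm (hF : IsCommutingFiltration P F) (q1 q2 : Fin d) (l1 l2 : ℤ)
    (f : Ω → ℝ) (hf : Integrable f P) :
    P[P[f | sigmaQ F q1 l1] | sigmaQ F q2 l2]
      =ᵐ[P] P[P[f | sigmaQ F q2 l2] | sigmaQ F q1 l1] := by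
  rcases eq_or_ne q1 q2 with rfl | hq
  · rcases le_total l1 l2 with h | h
    · have hL : P[P[f | sigmaQ F q1 l1] | sigmaQ F q1 l2] = P[f | sigmaQ F q1 l1] :=
        condExp_of_stronglyMeasurable (sigmaQ_le' hF q1 l2)
          (stronglyMeasurable_condExp.mono (sigmaQ_mono' hF q1 h)) integrable_condExp
      have hR : P[P[f | sigmaQ F q1 l2] | sigmaQ F q1 l1] =ᵐ[P] P[f | sigmaQ F q1 l1] :=
        condExp_condExp_of_le (sigmaQ_mono' hF q1 h) (sigmaQ_le' hF q1 l2)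
      rw [hL]; exact hR.symm
    · have hL : P[P[f | sigmaQ F q1 l2] | sigmaQ F q1 l1] = P[f | sigmaQ F q1 l2] :=
        condExp_of_stronglyMeasurable (sigmaQ_le' hF q1 l1)
          (stronglyMeasurable_condExp.mono (sigmaQ_mono' hF q1 h)) integrable_condExp
      have hR : P[P[f | sigmaQ F q1 l1] | sigmaQ F q1 l2] =ᵐ[P] P[f | sigmaQ F q1 l2] :=
        condExp_condExp_of_le (sigmaQ_mono' hF q1 h) (sigmaQ_le' hF q1 l1)
      rw [hL]; exact hR
  · exact condexp_comm_symm hF hq l1 l2 f hf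

lemma integrable_projQ (q : Fin d) (l : ℤ) (f : Ω → ℝ) : Integrable (projQ P F q l f) P :=
  integrable_condExp.sub integrable_condExp

lemma projQ_congr (q : Fin d) (l : ℤ) {f g : Ω → ℝ} (h : f =ᵐ[P] g) :
    projQ P F q l f =ᵐ[P] projQ P F q l g :=
  (condExp_congr_ae h).sub (condExp_congr_ae h)

lemma projQ_comm (hF : IsCommutingFiltration P F) (q1 q2 : Fin d) (l1 l2 : ℤ) {f : Ω → ℝ}
    (hf : Integrable f P) :
    projQ P F q1 l1 (projQ P F q2 l2 f) =ᵐ[P] projQ P F q2 l2 (projQ P F q1 l1 f) := by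
  have e : ∀ (q q' : Fin d) (a b : ℤ),
      P[projQ P F q' b f | sigmaQ F q a] =ᵐ[P]
        P[P[f | sigmaQ F q' b] | sigmaQ F q a]
          - P[P[f | sigmaQ F q' (b - 1)] | sigmaQ F q a] :=
    fun q q' a b => condExp_sub integrable_condExp integrable_condExp _
  have S : ∀ a b : ℤ, P[P[f | sigmaQ F q2 b] | sigmaQ F q1 a]
      =ᵐ[P] P[P[f | sigmaQ F q1 a] | sigmaQ F q2 b] :=
    fun a b => condexp_sigmaQ_symm hF q2 q1 b a f hf
  filter_upwards [e q1 q2 l1 l2, e q1 q2 l1 (l2 - 1), e q2 q1 l2 l1, e q2 q1 l2 (l1 - 1),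
    e q1 q2 (l1 - 1) l2, e q1 q2 (l1 - 1) (l2 - 1), e q2 q1 (l2 - 1) l1,
    e q2 q1 (l2 - 1) (l1 - 1),
    S l1 l2, S l1 (l2 - 1), S (l1 - 1) l2, S (l1 - 1) (l2 - 1)] with ω
      h1 h2 h3 h4 h5 h6 h7 h8 s1 s2 s3 s4
  simp only [projQ, Pi.sub_apply] at h1 h2 h3 h4 h5 h6 h7 h8 s1 s2 s3 s4 ⊢
  linarith

def applyL (P : Measure Ω) (F : (Fin d → ℤ) → MeasurableSpace Ω)
    (L : List (Fin d × ℤ)) (f : Ω → ℝ) : Ω → ℝ :=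
  L.foldr (fun p h => projQ P F p.1 p.2 h) f

lemma applyL_integrable (L : List (Fin d × ℤ)) {f : Ω → ℝ} (hf : Integrable f P) :
    Integrable (applyL P F L f) P := by
  induction L with
  | nil => exact hf
  | cons a L ih => exact integrable_condExp.sub integrable_condExp

lemma applyL_perm (hF : IsCommutingFiltration P F) {L L' : List (Fin d × ℤ)} (hp : L.Perm L') :
    ∀ {f : Ω → ℝ}, Integrable f P → applyL P F L f =ᵐ[P] applyL P F L' f := by
  induction hp with
  | nil => intro f _; exact Filter.EventuallyEq.rfl
  | cons a _ ih => intro f hf; exact projQ_congr _ _ (ih hf)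
  | swap a b l => intro f hf; exact projQ_comm hF _ _ _ _ (applyL_integrable l hf)
  | trans _ _ ih1 ih2 => intro f hf; exact (ih1 hf).trans (ih2 hf)

end Aux

end Aux2

/-- For a commuting filtration indexed by `ℤ^d`, the one-coordinate
projection operators commute: for `q₁ ≠ q₂`, `P^(q₁)_{ℓ₁} P^(q₂)_{ℓ₂} f = P^(q₂)_{ℓ₂} P^(q₁)_{ℓ₁} f`
a.s. for every `f ∈ L²`; consequently the operators `P_j`, `j ∈ ℤ^d`, pairwise commute. -/
theorem statement0
    {Ω : Type} [m0 : MeasurableSpace Ω] (P : Measure Ω) [IsProbabilityMeasure P]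
    (d : ℕ) (hd : 1 ≤ d)
    (F : (Fin d → ℤ) → MeasurableSpace Ω)
    (hF : IsCommutingFiltration P F) :
    (∀ f : Ω → ℝ, MemLp f 2 P → ∀ (q₁ q₂ : Fin d) (l₁ l₂ : ℤ), q₁ ≠ q₂ →
        projQ P F q₁ l₁ (projQ P F q₂ l₂ f) =ᵐ[P] projQ P F q₂ l₂ (projQ P F q₁ l₁ f)) ∧
      (∀ f : Ω → ℝ, MemLp f 2 P → ∀ i j : Fin d → ℤ,
        projP P F i (projP P F j f) =ᵐ[P] projP P F j (projP P F i f)) := by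
  have hint : ∀ {f : Ω → ℝ}, MemLp f 2 P → Integrable f P :=
    fun hf => hf.integrable one_le_two
  constructor
  · intro f hf q1 q2 l1 l2 _
    exact projQ_comm hF q1 q2 l1 l2 (hint hf)
  · intro f hf i j
    have h1 : ∀ (k : Fin d → ℤ) (g : Ω → ℝ), projP P F k g
        = applyL P F ((List.finRange d).map fun q => (q, k q)) g := by
      intro k g
      simp only [projP, applyL, List.foldr_map]
    have h2 : ∀ (L L' : List (Fin d × ℤ)) (g : Ω → ℝ),
        applyL P F L (applyL P F L' g) = applyL P F (L ++ L') g := by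
      intro L L' g
      simp only [applyL, List.foldr_append]
    rw [h1 j f, h1 i, h1 i f, h1 j, h2, h2]
    exact applyL_perm hF (List.perm_append_comm) (hint hf)
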